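/- Let d ≥ 1, ν ∈ (0, 1/d), γ > 0, and let u, v ∈ Δ^d_ν satisfy KL(u‖v) ≤ ½·γ²·ν². Then for every i ∈ [d], u_i/(1 + γ) ≤ v_i ≤ (1 + γ)·u_i. -/

import Mathlib

open Real Set

private lemma log_quad_le {x : ℝ} (hx : 0 < x) (hx1 : x ≤ 1) :
    (x - 1) ^ 2 / 2 ≤ x - 1 - Real.log x := by
  set f := fun x : ℝ => x - 1 - (x - 1) ^ 2 / 2 - Real.log x with hf
  have hder : ∀ y ∈ Set.Ioi (0 : ℝ), HasDerivAt f (1 - (y - 1) - y⁻¹) y := by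
    intro y hy
    have hlog := Real.hasDerivAt_log (ne_of_gt hy)
    have hp : HasDerivAt (fun y : ℝ => y - 1 - (y - 1) ^ 2 / 2) (1 - (y - 1)) y := by
      have h1 := ((hasDerivAt_id y).sub_const 1)
      have h2 := (h1.pow 2).div_const 2
      have h3 := h1.sub h2
      refine HasDerivAt.congr_deriv h3 ?_
      simp only [id_eq]
      ring
    exact hp.sub hlog
  have hmono : AntitoneOn f (Set.Ioi 0) := by
    apply antitoneOn_of_deriv_nonpos (convex_Ioi 0)
    · exact fun y hy => ((hder y hy).continuousAt.continuousWithinAt)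
    · intro y hy
      rw [interior_Ioi] at hy
      exact (hder y hy).differentiableAt.differentiableWithinAt
    · intro y hy
      rw [interior_Ioi] at hy
      rw [(hder y hy).deriv]
      have hy0 : (0:ℝ) < y := hy
      have : 1 - (y - 1) - y⁻¹ = -((y - 1) ^ 2) / y := by field_simp; ring
      rw [this]
      apply div_nonpos_of_nonpos_of_nonneg (neg_nonpos.mpr (by positivity)) hy0.le
  have h1 : f 1 ≤ f x := hmono (Set.mem_Ioi.mpr hx) (Set.mem_Ioi.mpr one_pos) hx1
  simp only [hf] at h1
  simp [Real.log_one] at h1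
  nlinarith [h1]

private lemma log_quad_ge {x : ℝ} (hx : 1 ≤ x) :
    (x - 1) ^ 2 / (2 * x) ≤ x - 1 - Real.log x := by
  set f := fun x : ℝ => x - 1 - (x - 1) ^ 2 / (2 * x) - Real.log x with hf
  have hder : ∀ y ∈ Set.Ioi (0 : ℝ), HasDerivAt f
      (1 - ((2 * (y-1) * (2*y) - (y-1)^2 * 2) / (2*y)^2) - y⁻¹) y := by
    intro y hy
    have hy0 : (0:ℝ) < y := hy
    have hlog := Real.hasDerivAt_log (ne_of_gt hy0)
    have hnum : HasDerivAt (fun y : ℝ => (y - 1) ^ 2) (2 * (y - 1)) y := by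
      have h1 := ((hasDerivAt_id y).sub_const 1)
      have h2 := h1.pow 2
      refine HasDerivAt.congr_deriv h2 ?_
      simp only [id_eq]
      ring
    have hden : HasDerivAt (fun y : ℝ => 2 * y) 2 y := by
      simpa using (hasDerivAt_id y).const_mul 2
    have hdiv := hnum.div hden (by positivity)
    have h1 := ((hasDerivAt_id y).sub_const 1).sub hdiv
    have := h1.sub hlog
    exact this
  have hmono : MonotoneOn f (Set.Ioi 0) := by
    apply monotoneOn_of_deriv_nonneg (convex_Ioi 0)
    · exact fun y hy => ((hder y hy).continuousAt.continuousWithinAt)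
    · intro y hy
      rw [interior_Ioi] at hy
      exact (hder y hy).differentiableAt.differentiableWithinAt
    · intro y hy
      rw [interior_Ioi] at hy
      rw [(hder y hy).deriv]
      have hy0 : (0:ℝ) < y := hy
      have : 1 - ((2 * (y-1) * (2*y) - (y-1)^2 * 2) / (2*y)^2) - y⁻¹
          = (y - 1) ^ 2 / (2 * y ^ 2) := by field_simp; ring
      rw [this]
      positivity
  have hx0 : (0:ℝ) < x := lt_of_lt_of_le one_pos hx
  have h1 : f 1 ≤ f x := hmono (Set.mem_Ioi.mpr one_pos) (Set.mem_Ioi.mpr hx0) hx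
  simp only [hf] at h1
  simp [Real.log_one] at h1
  nlinarith [h1]

private lemma key_ineq {a b : ℝ} (ha : 0 < a) (ha1 : a ≤ 1) (hb : 0 < b) (hb1 : b ≤ 1) :
    (a - b) ^ 2 / 2 ≤ a * Real.log (a / b) - a + b := by
  have hs : 0 < b / a := by positivity
  have hlog : Real.log (a / b) = - Real.log (b / a) := by
    rw [← Real.log_inv]
    congr 1
    field_simp
  rw [hlog]
  rcases le_total b a with hba | hab
  · -- s = b/a ≤ 1
    have hs1 : b / a ≤ 1 := (div_le_one ha).mpr hba
    have := log_quad_le hs hs1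
    -- (b/a - 1)^2/2 ≤ b/a - 1 - log(b/a)
    have h2 : a * ((b/a - 1)^2/2) ≤ a * (b/a - 1 - Real.log (b/a)) :=
      mul_le_mul_of_nonneg_left this ha.le
    have e1 : a * (b/a - 1 - Real.log (b/a)) = b - a - a * Real.log (b/a) := by
      field_simp
    have e2 : a * ((b/a - 1)^2/2) = (a - b)^2 / (2 * a) := by
      field_simp; ring
    rw [e1, e2] at h2
    have h3 : (a - b)^2 / 2 ≤ (a - b)^2 / (2 * a) := by
      apply div_le_div_of_nonneg_left (by positivity) (by positivity)
      nlinarith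
    nlinarith
  · -- s = b/a ≥ 1
    have hs1 : 1 ≤ b / a := (one_le_div ha).mpr hab
    have := log_quad_ge hs1
    have h2 : a * ((b/a - 1)^2/(2 * (b/a))) ≤ a * (b/a - 1 - Real.log (b/a)) :=
      mul_le_mul_of_nonneg_left this ha.le
    have e1 : a * (b/a - 1 - Real.log (b/a)) = b - a - a * Real.log (b/a) := by
      field_simp
    have e2 : a * ((b/a - 1)^2/(2 * (b/a))) = (a - b)^2 / (2 * b) := by
      field_simp; ring
    rw [e1, e2] at h2
    have h3 : (a - b)^2 / 2 ≤ (a - b)^2 / (2 * b) := by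
      apply div_le_div_of_nonneg_left (by positivity) (by positivity)
      nlinarith
    nlinarith


/-- For `d ≥ 1`, `ν ∈ (0, 1/d)`, `γ > 0`, and `u, v` in the ν-truncated simplex
with `KL(u‖v) ≤ ½γ²ν²`, every coordinate satisfies `u_i/(1+γ) ≤ v_i ≤ (1+γ)·u_i`. -/
theorem stmt19 {d : ℕ} (hd : 1 ≤ d) (ν : ℝ) (hν : 0 < ν) (hν' : ν < 1 / d)
    (γ : ℝ) (hγ : 0 < γ) (u v : Fin d → ℝ)
    (hu : (∀ i, ν ≤ u i) ∧ ∑ i, u i = 1)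
    (hv : (∀ i, ν ≤ v i) ∧ ∑ i, v i = 1)
    (hKL : ∑ i, u i * Real.log (u i / v i) ≤ 1 / 2 * γ ^ 2 * ν ^ 2) :
    ∀ i, u i / (1 + γ) ≤ v i ∧ v i ≤ (1 + γ) * u i := by
  obtain ⟨hul, hus⟩ := hu
  obtain ⟨hvl, hvs⟩ := hv
  have hupos : ∀ i, 0 < u i := fun i => lt_of_lt_of_le hν (hul i)
  have hvpos : ∀ i, 0 < v i := fun i => lt_of_lt_of_le hν (hvl i)
  have hu1 : ∀ i, u i ≤ 1 := by
    intro i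
    calc u i ≤ ∑ j, u j := Finset.single_le_sum (fun j _ => (hupos j).le) (Finset.mem_univ i)
    _ = 1 := hus
  have hv1 : ∀ i, v i ≤ 1 := by
    intro i
    calc v i ≤ ∑ j, v j := Finset.single_le_sum (fun j _ => (hvpos j).le) (Finset.mem_univ i)
    _ = 1 := hvs
  -- termwise lower bound
  have hterm : ∀ i, (u i - v i)^2/2 ≤ u i * Real.log (u i / v i) - u i + v i :=
    fun i => key_ineq (hupos i) (hu1 i) (hvpos i) (hv1 i)
  have hsum : ∑ i, (u i * Real.log (u i / v i) - u i + v i)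
      = ∑ i, u i * Real.log (u i / v i) := by
    rw [Finset.sum_add_distrib, Finset.sum_sub_distrib, hus, hvs]
    ring
  intro i
  -- each term is nonneg, so term i ≤ sum
  have hsingle : (u i - v i)^2/2 ≤ ∑ j, (u j * Real.log (u j / v j) - u j + v j) := by
    calc (u i - v i)^2/2 ≤ u i * Real.log (u i / v i) - u i + v i := hterm i
    _ ≤ ∑ j, (u j * Real.log (u j / v j) - u j + v j) :=
        Finset.single_le_sum (fun j _ => le_trans (by positivity) (hterm j)) (Finset.mem_univ i)
  rw [hsum] at hsingle
  have hsq : (u i - v i)^2 ≤ (γ * ν)^2 := by nlinarith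
  have habs : |u i - v i| ≤ γ * ν := by
    rw [← Real.sqrt_sq (by positivity : (0:ℝ) ≤ γ * ν)]
    rw [← Real.sqrt_sq_eq_abs]
    exact Real.sqrt_le_sqrt hsq
  have h1 := abs_le.mp habs
  constructor
  · -- u i ≤ (1+γ) v i
    have : u i ≤ v i + γ * ν := by linarith [h1.2]
    have h2 : u i ≤ (1 + γ) * v i := by nlinarith [hvl i]
    rw [div_le_iff₀ (by positivity : (0:ℝ) < 1 + γ)]
    linarith [h2]
  · have : v i ≤ u i + γ * ν := by linarith [h1.1]
    nlinarith [hul i]
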